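/- Let α, β ∈ (0, π) with α + β < π. Then there exist integers n_L, n_R with n_L + n_R ≥ 0 and angles φ, ψ ∈ [π/4, π/2] with π/2 ≤ φ + ψ < π such that cot α = n_L(cot φ + cot ψ) + cot φ and cot β = n_R(cot φ + cot ψ) + cot ψ. -/

import Mathlib

open Real

lemma cot_pi_div_two_sub_arctan (x : ℝ) : Real.cot (π/2 - Real.arctan x) = x := by
  rw [Real.cot_eq_cos_div_sin, Real.cos_pi_div_two_sub, Real.sin_pi_div_two_sub,
    ← Real.tan_eq_sin_div_cos, Real.tan_arctan]

/-- Lattice-fitting lemma: for any wedge angles `α, β ∈ (0,π)` with `α+β < π`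
there are integers `n_L, n_R` with `n_L + n_R ≥ 0` and lattice angles
`φ, ψ ∈ [π/4, π/2]` with `π/2 ≤ φ+ψ < π` such that
`cot α = n_L(cot φ + cot ψ) + cot φ` and `cot β = n_R(cot φ + cot ψ) + cot ψ`. -/
theorem stmt_3 (α β : ℝ) (hα : α ∈ Set.Ioo 0 π) (hβ : β ∈ Set.Ioo 0 π)
    (hαβ : α + β < π) :
    ∃ (nL nR : ℤ) (φ ψ : ℝ), nL + nR ≥ 0 ∧
      φ ∈ Set.Icc (π/4) (π/2) ∧ ψ ∈ Set.Icc (π/4) (π/2) ∧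
      π/2 ≤ φ + ψ ∧ φ + ψ < π ∧
      Real.cot α = nL * (Real.cot φ + Real.cot ψ) + Real.cot φ ∧
      Real.cot β = nR * (Real.cot φ + Real.cot ψ) + Real.cot ψ := by
  obtain ⟨hα0, hαπ⟩ := hα
  obtain ⟨hβ0, hβπ⟩ := hβ
  set a := Real.cot α with ha
  set b := Real.cot β with hb
  have hsa : 0 < Real.sin α := Real.sin_pos_of_pos_of_lt_pi hα0 hαπ
  have hsb : 0 < Real.sin β := Real.sin_pos_of_pos_of_lt_pi hβ0 hβπ
  have hab : 0 < a + b := by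
    have h : a + b = Real.sin (α+β) / (Real.sin α * Real.sin β) := by
      rw [ha, hb, Real.cot_eq_cos_div_sin, Real.cot_eq_cos_div_sin, Real.sin_add]
      field_simp
      ring
    rw [h]
    exact div_pos (Real.sin_pos_of_pos_of_lt_pi (by linarith) hαβ) (mul_pos hsa hsb)
  set N : ℤ := ⌈a + b⌉ with hNdef
  have hN1 : 0 < N := by rw [hNdef]; exact Int.ceil_pos.mpr hab
  have hNr : a + b ≤ (N : ℝ) := Int.le_ceil _
  have hNpos : (0:ℝ) < (N:ℝ) := by exact_mod_cast hN1
  set s : ℝ := (a + b) / N with hsdef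
  have hs0 : 0 < s := div_pos hab hNpos
  have hs1 : s ≤ 1 := by rw [hsdef, div_le_one hNpos]; exact hNr
  have hNs : (N:ℝ) * s = a + b := by rw [hsdef]; field_simp [hNpos.ne']
  set nL : ℤ := ⌊a / s⌋ with hnLdef
  have h1 : (nL:ℝ) * s ≤ a := by
    have := Int.floor_le (a / s)
    calc (nL:ℝ) * s ≤ (a / s) * s := by nlinarith
    _ = a := by field_simp
  have h2 : a < ((nL:ℝ) + 1) * s := by
    have := Int.lt_floor_add_one (a / s)
    calc a = (a / s) * s := by field_simp
    _ < ((nL:ℝ) + 1) * s := by nlinarith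
  set u : ℝ := a - nL * s with hudef
  set v : ℝ := s - u with hvdef
  have hu0 : 0 ≤ u := by simp only [hudef]; linarith
  have hus : u < s := by simp only [hudef]; nlinarith
  have hv0 : 0 < v := by simp only [hvdef]; linarith
  have hv1 : v ≤ 1 := by simp only [hvdef]; linarith
  have hu1 : u ≤ 1 := by linarith
  have hau : Real.arctan u ≤ π/4 := by
    calc Real.arctan u ≤ Real.arctan 1 := Real.arctan_strictMono.monotone hu1
    _ = π/4 := Real.arctan_one
  have hav : Real.arctan v ≤ π/4 := by
    calc Real.arctan v ≤ Real.arctan 1 := Real.arctan_strictMono.monotone hv1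
    _ = π/4 := Real.arctan_one
  have hau0 : 0 ≤ Real.arctan u := by
    have := Real.arctan_strictMono.monotone hu0
    rwa [Real.arctan_zero] at this
  have hav0 : 0 < Real.arctan v := by
    have := Real.arctan_strictMono hv0
    rwa [Real.arctan_zero] at this
  refine ⟨nL, N - 1 - nL, π/2 - Real.arctan u, π/2 - Real.arctan v, by omega,
    ⟨by linarith, by linarith⟩, ⟨by linarith, by linarith⟩, by linarith, by linarith, ?_, ?_⟩
  · rw [cot_pi_div_two_sub_arctan, cot_pi_div_two_sub_arctan]
    simp only [hvdef, hudef]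
    ring
  · rw [cot_pi_div_two_sub_arctan, cot_pi_div_two_sub_arctan]
    have huv : u + v = s := by simp only [hvdef]; ring
    rw [huv]
    push_cast
    nlinarith [hNs, hudef]
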